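/- For any discrete memoryless multiple access channel, any C_in¹ ≥ 0, and any C_out = (C_out¹, C_out²) ∈ ℝ²_{≥0}, one has C_sum,avg((C_in¹, 0), C_out) ≤ C_sum,avg((0,0),(0,0)) + min{C_in¹, C_out²}; consequently C_out² ↦ C_sum,avg((C_in¹,0),(0,C_out²)) is continuous at C_out² = 0. -/

import Mathlib

open scoped BigOperators

noncomputable section

/-- Shannon entropy (base 2) of a (sub)probability mass function on a finite type. -/
def ent2 {α : Type} [Fintype α] (p : α → ℝ) : ℝ :=
  -∑ a, p a * Real.logb 2 (p a)

/-- Conditional mutual information `I(A;B|U)` (in bits) of the joint pmf `p` on `U × A × B`,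
given in curried form, computed as `H(A|U) + H(B|U) - H(A,B|U)`. -/
def condMI {U A B : Type} [Fintype U] [Fintype A] [Fintype B]
    (p : U → A → B → ℝ) : ℝ :=
  ent2 (fun ua : U × A => ∑ b, p ua.1 ua.2 b)
    + ent2 (fun ub : U × B => ∑ a, p ub.1 a ub.2)
    - ent2 (fun uab : U × A × B => p uab.1 uab.2.1 uab.2.2)
    - ent2 (fun u : U => ∑ a, ∑ b, p u a b)

/-- `p` is a joint pmf on `U × A × B` (curried form). -/
def IsPMF3 {U A B : Type} [Fintype U] [Fintype A] [Fintype B] (p : U → A → B → ℝ) : Prop :=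
  (∀ u a b, 0 ≤ p u a b) ∧ ∑ u, ∑ a, ∑ b, p u a b = 1

/-- A discrete memoryless multiple access channel with input alphabets `X1, X2` and
output alphabet `Y`. -/
structure MAC (X1 X2 Y : Type) [Fintype X1] [Fintype X2] [Fintype Y] where
  W : X1 → X2 → Y → ℝ
  nonneg : ∀ x1 x2 y, 0 ≤ W x1 x2 y
  sum_one : ∀ x1 x2, ∑ y, W x1 x2 y = 1

variable {X1 X2 Y : Type} [Fintype X1] [Fintype X2] [Fintype Y]

/-- The set of values `(1/n) I(X₁ⁿ,X₂ⁿ;Yⁿ|U)` over all finite auxiliary alphabets `U`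
(wlog `U = Fin k`) and all joint pmfs `p(u,x₁ⁿ,x₂ⁿ)` with `I(X₁ⁿ;X₂ⁿ|U) ≤ nδ`,
where `Yⁿ` is the output of the `n`-th extension of the MAC `M`. -/
def sigmaSet (M : MAC X1 X2 Y) (n : ℕ) (δ : ℝ) : Set ℝ :=
  {r | ∃ (k : ℕ) (p : Fin k → (Fin n → X1) → (Fin n → X2) → ℝ),
    IsPMF3 p ∧ condMI p ≤ (n : ℝ) * δ ∧
    r = (1 / (n : ℝ)) *
      condMI (fun (u : Fin k) (x : (Fin n → X1) × (Fin n → X2)) (y : Fin n → Y) =>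
        p u x.1 x.2 * ∏ t, M.W (x.1 t) (x.2 t) (y t)) }

/-- `σ_n(δ)`. -/
def sigmaN (M : MAC X1 X2 Y) (n : ℕ) (δ : ℝ) : ℝ := sSup (sigmaSet M n δ)

/-- `σ(δ) = lim_n σ_n(δ) = sup_n σ_n(δ)`. -/
def sigmaF (M : MAC X1 X2 Y) (δ : ℝ) : ℝ := ⨆ n : ℕ, sigmaN M (n + 1) δ

/-- `⌊2^{nR}⌋`, the size of a message (or link) index set. -/
def msgSize (n : ℕ) (R : ℝ) : ℕ := ⌊(2 : ℝ) ^ ((n : ℝ) * R)⌋₊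

/-- A `(2^{nR₁}, 2^{nR₂}, n)`-code for the MAC `M` with a
`((c1,c2),(d1,d2))`-cooperation facilitator. -/
structure Code (M : MAC X1 X2 Y) (n : ℕ) (R1 R2 c1 c2 d1 d2 : ℝ) where
  /-- encoder 1 to CF -/
  toCF1 : Fin (msgSize n R1) → Fin (msgSize n c1)
  /-- encoder 2 to CF -/
  toCF2 : Fin (msgSize n R2) → Fin (msgSize n c2)
  /-- CF to encoder 1 -/
  cf1 : Fin (msgSize n c1) → Fin (msgSize n c2) → Fin (msgSize n d1)
  /-- CF to encoder 2 -/
  cf2 : Fin (msgSize n c1) → Fin (msgSize n c2) → Fin (msgSize n d2)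
  /-- encoder 1 -/
  f1 : Fin (msgSize n R1) → Fin (msgSize n d1) → Fin n → X1
  /-- encoder 2 -/
  f2 : Fin (msgSize n R2) → Fin (msgSize n d2) → Fin n → X2
  /-- decoder -/
  dec : (Fin n → Y) → Fin (msgSize n R1) × Fin (msgSize n R2)

/-- The error probability `λ_n(w₁,w₂)` of the code `C` on the message pair `(w₁,w₂)`. -/
def errProb {M : MAC X1 X2 Y} {n : ℕ} {R1 R2 c1 c2 d1 d2 : ℝ}
    (C : Code M n R1 R2 c1 c2 d1 d2)
    (w1 : Fin (msgSize n R1)) (w2 : Fin (msgSize n R2)) : ℝ :=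
  ∑ y : Fin n → Y,
    if C.dec y ≠ (w1, w2) then
      ∏ t, M.W (C.f1 w1 (C.cf1 (C.toCF1 w1) (C.toCF2 w2)) t)
               (C.f2 w2 (C.cf2 (C.toCF1 w1) (C.toCF2 w2)) t) (y t)
    else 0

/-- Average error probability of a code. -/
def avgErr {M : MAC X1 X2 Y} {n : ℕ} {R1 R2 c1 c2 d1 d2 : ℝ}
    (C : Code M n R1 R2 c1 c2 d1 d2) : ℝ :=
  (1 / (2 : ℝ) ^ ((n : ℝ) * (R1 + R2))) * ∑ w1, ∑ w2, errProb C w1 w2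

/-- Maximal error probability of a code. -/
def maxErr {M : MAC X1 X2 Y} {n : ℕ} {R1 R2 c1 c2 d1 d2 : ℝ}
    (C : Code M n R1 R2 c1 c2 d1 d2) : ℝ :=
  sSup {e | ∃ w1 w2, e = errProb C w1 w2}

/-- `(R₁,R₂)` is achievable under the average-error criterion for the MAC `M` with a
`((c1,c2),(d1,d2))`-CF. -/
def AchievableAvg (M : MAC X1 X2 Y) (c1 c2 d1 d2 : ℝ) (R : ℝ × ℝ) : Prop :=
  0 ≤ R.1 ∧ 0 ≤ R.2 ∧
  ∃ C : (n : ℕ) → Code M (n + 1) R.1 R.2 c1 c2 d1 d2,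
    Filter.Tendsto (fun n => avgErr (C n)) Filter.atTop (nhds 0)

/-- `(R₁,R₂)` is achievable under the maximal-error criterion. -/
def AchievableMax (M : MAC X1 X2 Y) (c1 c2 d1 d2 : ℝ) (R : ℝ × ℝ) : Prop :=
  0 ≤ R.1 ∧ 0 ≤ R.2 ∧
  ∃ C : (n : ℕ) → Code M (n + 1) R.1 R.2 c1 c2 d1 d2,
    Filter.Tendsto (fun n => maxErr (C n)) Filter.atTop (nhds 0)

/-- Average-error sum-capacity `C_sum,avg(C_in, C_out)`. -/
def CsumAvg (M : MAC X1 X2 Y) (Cin Cout : ℝ × ℝ) : ℝ :=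
  sSup {s | ∃ R ∈ closure {R : ℝ × ℝ | AchievableAvg M Cin.1 Cin.2 Cout.1 Cout.2 R},
    s = R.1 + R.2}

/-- Maximal-error sum-capacity `C_sum,max(C_in, C_out)`. -/
def CsumMax (M : MAC X1 X2 Y) (Cin Cout : ℝ × ℝ) : ℝ :=
  sSup {s | ∃ R ∈ closure {R : ℝ × ℝ | AchievableMax M Cin.1 Cin.2 Cout.1 Cout.2 R},
    s = R.1 + R.2}

/-- `max_{p(x₁,x₂)} I(X₁,X₂;Y)`, used to specify when CF input links are large enough
that the CF has full knowledge of both messages. -/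
def maxMI (M : MAC X1 X2 Y) : ℝ :=
  sSup {r | ∃ p : X1 × X2 → ℝ, (∀ x, 0 ≤ p x) ∧ (∑ x, p x = 1) ∧
    r = condMI (fun (_ : Unit) (x : X1 × X2) (y : Y) => p x * M.W x.1 x.2 y)}

end


section StatementProof

open Finset Filter

variable {X1 X2 Y : Type} [Fintype X1] [Fintype X2] [Fintype Y]

lemma msgSize_zero (n : ℕ) : msgSize n 0 = 1 := by
  simp [msgSize]

lemma one_le_msgSize (n : ℕ) {R : ℝ} (hR : 0 ≤ R) : 1 ≤ msgSize n R := by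
  have h1 : (1 : ℝ) ≤ (2 : ℝ) ^ ((n : ℝ) * R) := by
    calc (1:ℝ) = (2:ℝ) ^ (0:ℝ) := by norm_num
    _ ≤ (2:ℝ) ^ ((n:ℝ) * R) :=
      Real.rpow_le_rpow_of_exponent_le (by norm_num) (by positivity)
  exact Nat.le_floor (by exact_mod_cast h1)

lemma msgSize_pos (n : ℕ) {R : ℝ} (hR : 0 ≤ R) : 0 < msgSize n R := one_le_msgSize n hR

lemma msgSize_le_rpow (n : ℕ) (R : ℝ) : (msgSize n R : ℝ) ≤ (2 : ℝ) ^ ((n : ℝ) * R) :=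
  Nat.floor_le (by positivity)

lemma rpow_le_two_mul_msgSize (n : ℕ) {R : ℝ} (hR : 0 ≤ R) :
    (2 : ℝ) ^ ((n : ℝ) * R) ≤ 2 * (msgSize n R : ℝ) := by
  rw [show msgSize n R = ⌊(2 : ℝ) ^ ((n : ℝ) * R)⌋₊ from rfl]
  set x : ℝ := (2 : ℝ) ^ ((n : ℝ) * R) with hx
  have h1 : (1 : ℝ) ≤ x := by
    rw [hx]
    calc (1:ℝ) = (2:ℝ) ^ (0:ℝ) := by norm_num
    _ ≤ (2:ℝ) ^ ((n:ℝ) * R) :=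
      Real.rpow_le_rpow_of_exponent_le (by norm_num) (by positivity)
  have hfl : (1 : ℝ) ≤ (⌊x⌋₊ : ℝ) := by
    exact_mod_cast Nat.le_floor (α := ℝ) (by exact_mod_cast h1)
  rcases le_or_gt x 2 with h2 | h2
  · calc x ≤ 2 := h2
      _ ≤ 2 * (⌊x⌋₊ : ℝ) := by nlinarith
  · have h3 : x - 1 < (⌊x⌋₊ : ℝ) := Nat.sub_one_lt_floor x
    nlinarith

lemma fin_msg0 (n : ℕ) (a b : Fin (msgSize n 0)) : a = b := by
  have h := msgSize_zero n
  have ha := a.2; have hb := b.2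
  exact Fin.ext (by omega)

lemma W_le_one (M : MAC X1 X2 Y) (x1 : X1) (x2 : X2) (y : Y) : M.W x1 x2 y ≤ 1 := by
  have h := M.sum_one x1 x2
  have := Finset.single_le_sum (f := fun y => M.W x1 x2 y)
    (fun i _ => M.nonneg x1 x2 i) (Finset.mem_univ y)
  linarith

lemma sum_prod_W (M : MAC X1 X2 Y) {n : ℕ} (x1 : Fin n → X1) (x2 : Fin n → X2) :
    ∑ y : Fin n → Y, ∏ t, M.W (x1 t) (x2 t) (y t) = 1 := by
  classical
  have h := Finset.prod_univ_sum (fun _ : Fin n => (Finset.univ : Finset Y))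
    (fun t y => M.W (x1 t) (x2 t) y)
  rw [Fintype.piFinset_univ] at h
  rw [← h]
  simp [M.sum_one]

lemma prod_W_nonneg (M : MAC X1 X2 Y) {n : ℕ} (x1 : Fin n → X1) (x2 : Fin n → X2)
    (y : Fin n → Y) : 0 ≤ ∏ t, M.W (x1 t) (x2 t) (y t) :=
  Finset.prod_nonneg fun t _ => M.nonneg _ _ _

lemma prod_W_le_one (M : MAC X1 X2 Y) {n : ℕ} (x1 : Fin n → X1) (x2 : Fin n → X2)
    (y : Fin n → Y) : ∏ t, M.W (x1 t) (x2 t) (y t) ≤ 1 :=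
  Finset.prod_le_one (fun t _ => M.nonneg _ _ _) (fun t _ => W_le_one M _ _ _)

lemma errProb_nonneg {M : MAC X1 X2 Y} {n : ℕ} {R1 R2 c1 c2 d1 d2 : ℝ}
    (C : Code M n R1 R2 c1 c2 d1 d2) (w1 : Fin (msgSize n R1)) (w2 : Fin (msgSize n R2)) :
    0 ≤ errProb C w1 w2 := by
  unfold errProb
  apply Finset.sum_nonneg
  intro y _
  split
  · exact prod_W_nonneg M _ _ _
  · exact le_refl 0
  
lemma avgErr_nonneg {M : MAC X1 X2 Y} {n : ℕ} {R1 R2 c1 c2 d1 d2 : ℝ}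
    (C : Code M n R1 R2 c1 c2 d1 d2) : 0 ≤ avgErr C := by
  unfold avgErr
  apply mul_nonneg (by positivity)
  exact Finset.sum_nonneg fun w1 _ => Finset.sum_nonneg fun w2 _ => errProb_nonneg C w1 w2

lemma correct_sum (M : MAC X1 X2 Y) {n : ℕ} {R1 R2 c1 c2 d1 d2 : ℝ}
    (C : Code M n R1 R2 c1 c2 d1 d2) (w1 : Fin (msgSize n R1)) (w2 : Fin (msgSize n R2)) :
    errProb C w1 w2
      + ∑ y : Fin n → Y, (if C.dec y = (w1, w2) then
          ∏ t, M.W (C.f1 w1 (C.cf1 (C.toCF1 w1) (C.toCF2 w2)) t)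
                   (C.f2 w2 (C.cf2 (C.toCF1 w1) (C.toCF2 w2)) t) (y t) else 0) = 1 := by
  unfold errProb
  rw [← Finset.sum_add_distrib]
  have hterm : ∀ y : Fin n → Y, ((if C.dec y ≠ (w1, w2) then
        ∏ t, M.W (C.f1 w1 (C.cf1 (C.toCF1 w1) (C.toCF2 w2)) t)
                 (C.f2 w2 (C.cf2 (C.toCF1 w1) (C.toCF2 w2)) t) (y t) else 0)
      + (if C.dec y = (w1, w2) then
        ∏ t, M.W (C.f1 w1 (C.cf1 (C.toCF1 w1) (C.toCF2 w2)) t)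
                 (C.f2 w2 (C.cf2 (C.toCF1 w1) (C.toCF2 w2)) t) (y t) else 0))
      = ∏ t, M.W (C.f1 w1 (C.cf1 (C.toCF1 w1) (C.toCF2 w2)) t)
                 (C.f2 w2 (C.cf2 (C.toCF1 w1) (C.toCF2 w2)) t) (y t) := by
    intro y; by_cases h : C.dec y = (w1, w2) <;> simp [h]
  rw [Finset.sum_congr rfl fun y _ => hterm y]
  exact sum_prod_W M _ _

lemma avgErr_lower {M : MAC X1 X2 Y} {n : ℕ} {R1 R2 c1 c2 d1 d2 : ℝ}
    (hR1 : 0 ≤ R1) (hR2 : 0 ≤ R2)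
    (C : Code M n R1 R2 c1 c2 d1 d2) :
    1/4 - (Fintype.card Y : ℝ) ^ n / (2 : ℝ) ^ ((n : ℝ) * (R1 + R2)) ≤ avgErr C := by
  classical
  set N1 := msgSize n R1
  set N2 := msgSize n R2
  set T : ℝ := (2 : ℝ) ^ ((n : ℝ) * (R1 + R2)) with hT
  have hTpos : 0 < T := by rw [hT]; positivity
  -- sum of "correct" probabilities is at most |Y|^n
  have hcorr : ∑ w1 : Fin N1, ∑ w2 : Fin N2, ∑ y : Fin n → Y,
      (if C.dec y = (w1, w2) then
          ∏ t, M.W (C.f1 w1 (C.cf1 (C.toCF1 w1) (C.toCF2 w2)) t)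
                   (C.f2 w2 (C.cf2 (C.toCF1 w1) (C.toCF2 w2)) t) (y t) else 0)
      ≤ (Fintype.card Y : ℝ) ^ n := by
    have hswap : ∑ w1 : Fin N1, ∑ w2 : Fin N2, ∑ y : Fin n → Y,
        (if C.dec y = (w1, w2) then
            ∏ t, M.W (C.f1 w1 (C.cf1 (C.toCF1 w1) (C.toCF2 w2)) t)
                     (C.f2 w2 (C.cf2 (C.toCF1 w1) (C.toCF2 w2)) t) (y t) else 0)
        = ∑ y : Fin n → Y, ∑ w1 : Fin N1, ∑ w2 : Fin N2,
        (if C.dec y = (w1, w2) then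
            ∏ t, M.W (C.f1 w1 (C.cf1 (C.toCF1 w1) (C.toCF2 w2)) t)
                     (C.f2 w2 (C.cf2 (C.toCF1 w1) (C.toCF2 w2)) t) (y t) else 0) := by
      rw [Finset.sum_congr rfl fun w1 _ => Finset.sum_comm]
      rw [Finset.sum_comm]
    rw [hswap]
    calc ∑ y : Fin n → Y, ∑ w1 : Fin N1, ∑ w2 : Fin N2,
        (if C.dec y = (w1, w2) then
            ∏ t, M.W (C.f1 w1 (C.cf1 (C.toCF1 w1) (C.toCF2 w2)) t)
                     (C.f2 w2 (C.cf2 (C.toCF1 w1) (C.toCF2 w2)) t) (y t) else 0)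
        ≤ ∑ _y : Fin n → Y, (1 : ℝ) := by
          apply Finset.sum_le_sum
          intro y _
          calc ∑ w1 : Fin N1, ∑ w2 : Fin N2,
              (if C.dec y = (w1, w2) then
                  ∏ t, M.W (C.f1 w1 (C.cf1 (C.toCF1 w1) (C.toCF2 w2)) t)
                           (C.f2 w2 (C.cf2 (C.toCF1 w1) (C.toCF2 w2)) t) (y t) else 0)
              ≤ ∑ w1 : Fin N1, ∑ w2 : Fin N2,
              (if (C.dec y).1 = w1 then (1:ℝ) else 0) * (if (C.dec y).2 = w2 then (1:ℝ) else 0) := by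
                apply Finset.sum_le_sum; intro w1 _
                apply Finset.sum_le_sum; intro w2 _
                by_cases h : C.dec y = (w1, w2)
                · have h1 : (C.dec y).1 = w1 := by rw [h]
                  have h2 : (C.dec y).2 = w2 := by rw [h]
                  simp only [h, h1, h2, if_pos, if_true, mul_one, ite_true]
                  exact prod_W_le_one M _ _ _
                · rw [if_neg h]
                  by_cases h1 : (C.dec y).1 = w1
                  · have h2 : (C.dec y).2 ≠ w2 := by
                      intro h2; exact h (Prod.ext h1 h2)
                    simp [h1, h2]
                  · simp [h1]
            _ = 1 := by
                rw [← Finset.sum_mul_sum]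
                rw [Finset.sum_ite_eq, Finset.sum_ite_eq]
                simp
      _ = (Fintype.card Y : ℝ) ^ n := by
          rw [Finset.sum_const, Finset.card_univ, nsmul_eq_mul, mul_one]
          norm_cast
          rw [Fintype.card_fun]
          simp
  -- total error sum is at least N1*N2 - |Y|^n
  have htot : (N1 : ℝ) * (N2 : ℝ) - (Fintype.card Y : ℝ) ^ n
      ≤ ∑ w1 : Fin N1, ∑ w2 : Fin N2, errProb C w1 w2 := by
    have hsplit : ∑ w1 : Fin N1, ∑ w2 : Fin N2, (errProb C w1 w2
        + ∑ y : Fin n → Y, (if C.dec y = (w1, w2) then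
          ∏ t, M.W (C.f1 w1 (C.cf1 (C.toCF1 w1) (C.toCF2 w2)) t)
                   (C.f2 w2 (C.cf2 (C.toCF1 w1) (C.toCF2 w2)) t) (y t) else 0)) = (N1 : ℝ) * N2 := by
      rw [Finset.sum_congr rfl (fun w1 _ => Finset.sum_congr rfl
        (fun w2 _ => correct_sum M C w1 w2))]
      simp [mul_comm]
      rfl
    have := hcorr
    simp only [Finset.sum_add_distrib] at hsplit
    linarith
  -- lower bound N1 * N2
  have hN1 : (2:ℝ) ^ ((n:ℝ) * R1) ≤ 2 * (N1 : ℝ) := rpow_le_two_mul_msgSize n hR1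
  have hN2 : (2:ℝ) ^ ((n:ℝ) * R2) ≤ 2 * (N2 : ℝ) := rpow_le_two_mul_msgSize n hR2
  have hTsplit : T = (2:ℝ) ^ ((n:ℝ) * R1) * (2:ℝ) ^ ((n:ℝ) * R2) := by
    rw [hT, ← Real.rpow_add (by norm_num)]
    ring_nf
  have hprod : T / 4 ≤ (N1 : ℝ) * N2 := by
    have h1 : 0 ≤ (2:ℝ) ^ ((n:ℝ) * R1) := by positivity
    have h2 : 0 ≤ (2:ℝ) ^ ((n:ℝ) * R2) := by positivity
    nlinarith [mul_le_mul hN1 hN2 h2 (by positivity : (0:ℝ) ≤ 2 * (N1:ℝ))]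
  -- conclude
  unfold avgErr
  rw [← hT]
  have hsum : T / 4 - (Fintype.card Y : ℝ) ^ n
      ≤ ∑ w1 : Fin N1, ∑ w2 : Fin N2, errProb C w1 w2 := by linarith
  have hmul := mul_le_mul_of_nonneg_left hsum (le_of_lt (one_div_pos.mpr hTpos))
  have heq : (1 / T) * (T / 4 - (Fintype.card Y : ℝ) ^ n)
      = 1/4 - (Fintype.card Y : ℝ) ^ n / T := by
    have hTne : T ≠ 0 := ne_of_gt hTpos
    field_simp
  linarith

lemma code_nonempty_inputs {M : MAC X1 X2 Y} {n : ℕ} {R1 R2 c1 c2 d1 d2 : ℝ}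
    (hR1 : 0 ≤ R1) (hR2 : 0 ≤ R2)
    (C : Code M (n+1) R1 R2 c1 c2 d1 d2) : Nonempty X1 ∧ Nonempty X2 := by
  have w1 : Fin (msgSize (n+1) R1) := ⟨0, msgSize_pos (n+1) hR1⟩
  have w2 : Fin (msgSize (n+1) R2) := ⟨0, msgSize_pos (n+1) hR2⟩
  have t0 : Fin (n+1) := ⟨0, Nat.succ_pos n⟩
  exact ⟨⟨C.f1 w1 (C.cf1 (C.toCF1 w1) (C.toCF2 w2)) t0⟩,
         ⟨C.f2 w2 (C.cf2 (C.toCF1 w1) (C.toCF2 w2)) t0⟩⟩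

lemma achievable_sum_le {M : MAC X1 X2 Y} {c1 c2 d1 d2 : ℝ} {R : ℝ × ℝ}
    (h : AchievableAvg M c1 c2 d1 d2 R) :
    R.1 + R.2 ≤ Real.logb 2 (Fintype.card Y) := by
  obtain ⟨hR1, hR2, C, htend⟩ := h
  by_contra hB
  push_neg at hB
  obtain ⟨hX1, hX2⟩ := code_nonempty_inputs hR1 hR2 (C 0)
  have hY : 0 < Fintype.card Y := by
    rcases Nat.eq_zero_or_pos (Fintype.card Y) with h0 | h
    · exfalso
      have he : IsEmpty Y := Fintype.card_eq_zero_iff.mp h0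
      have := M.sum_one (Classical.arbitrary X1) (Classical.arbitrary X2)
      rw [Finset.univ_eq_empty, Finset.sum_empty] at this
      norm_num at this
    · exact h
  set q : ℝ := (Fintype.card Y : ℝ) / (2 : ℝ) ^ (R.1 + R.2) with hq
  have hq0 : 0 ≤ q := by positivity
  have hq1 : q < 1 := by
    rw [hq, div_lt_one (by positivity)]
    calc (Fintype.card Y : ℝ) = (2:ℝ) ^ (Real.logb 2 (Fintype.card Y)) := by
          rw [Real.rpow_logb (by norm_num) (by norm_num) (by exact_mod_cast hY)]
      _ < (2:ℝ) ^ (R.1 + R.2) := by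
          apply Real.rpow_lt_rpow_of_exponent_lt (by norm_num) hB
  have hbound : ∀ m : ℕ, 1/4 - q ^ (m+1) ≤ avgErr (C m) := by
    intro m
    have h1 := avgErr_lower hR1 hR2 (C m)
    have h2 : (Fintype.card Y : ℝ) ^ (m+1) / (2 : ℝ) ^ (((m+1:ℕ) : ℝ) * (R.1 + R.2))
        = q ^ (m+1) := by
      rw [hq, div_pow]
      congr 1
      rw [← Real.rpow_natCast ((2:ℝ) ^ (R.1 + R.2)) (m+1), ← Real.rpow_mul (by norm_num),
        mul_comm]
    rw [h2] at h1
    exact h1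
  have hlim1 : Filter.Tendsto (fun m : ℕ => 1/4 - q ^ (m+1)) Filter.atTop (nhds (1/4 - 0)) := by
    apply Filter.Tendsto.const_sub
    exact (tendsto_pow_atTop_nhds_zero_of_lt_one hq0 hq1).comp (tendsto_add_atTop_nat 1)
  have := le_of_tendsto_of_tendsto' hlim1 htend hbound
  norm_num at this


lemma achievable_zero_zero (M : MAC X1 X2 Y) (hX1 : Nonempty X1) (hX2 : Nonempty X2)
    {c1 c2 d1 d2 : ℝ} (h1 : 0 ≤ c1) (h2 : 0 ≤ c2) (h3 : 0 ≤ d1) (h4 : 0 ≤ d2) :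
    AchievableAvg M c1 c2 d1 d2 (0, 0) := by
  classical
  refine ⟨le_refl 0, le_refl 0, fun n => ?_, ?_⟩
  · exact
      { toCF1 := fun _ => ⟨0, msgSize_pos (n+1) h1⟩
        toCF2 := fun _ => ⟨0, msgSize_pos (n+1) h2⟩
        cf1 := fun _ _ => ⟨0, msgSize_pos (n+1) h3⟩
        cf2 := fun _ _ => ⟨0, msgSize_pos (n+1) h4⟩
        f1 := fun _ _ _ => Classical.arbitrary X1
        f2 := fun _ _ _ => Classical.arbitrary X2
        dec := fun _ => (⟨0, msgSize_pos (n+1) (le_refl (0:ℝ))⟩,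
                         ⟨0, msgSize_pos (n+1) (le_refl (0:ℝ))⟩) }
  · have hz : ∀ n : ℕ, avgErr (M := M)
        (n := n+1) (R1 := 0) (R2 := 0) (c1 := c1) (c2 := c2) (d1 := d1) (d2 := d2)
      { toCF1 := fun _ => ⟨0, msgSize_pos (n+1) h1⟩
        toCF2 := fun _ => ⟨0, msgSize_pos (n+1) h2⟩
        cf1 := fun _ _ => ⟨0, msgSize_pos (n+1) h3⟩
        cf2 := fun _ _ => ⟨0, msgSize_pos (n+1) h4⟩
        f1 := fun _ _ _ => Classical.arbitrary X1
        f2 := fun _ _ _ => Classical.arbitrary X2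
        dec := fun _ => (⟨0, msgSize_pos (n+1) (le_refl (0:ℝ))⟩,
                         ⟨0, msgSize_pos (n+1) (le_refl (0:ℝ))⟩) } = 0 := by
      intro n
      unfold avgErr
      rw [mul_eq_zero]
      right
      apply Finset.sum_eq_zero
      intro w1 _
      apply Finset.sum_eq_zero
      intro w2 _
      unfold errProb
      apply Finset.sum_eq_zero
      intro y _
      rw [if_neg]
      intro hne
      exact hne (Prod.ext (fin_msg0 (n+1) _ _) (fin_msg0 (n+1) _ _))
    simp only [hz]
    exact tendsto_const_nhds

lemma achievable_ext (M : MAC X1 X2 Y) {c1 d2 R1 R2 : ℝ} (h1 : 0 ≤ c1) (h4 : 0 ≤ d2)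
    (h : AchievableAvg M 0 0 0 0 (R1, R2)) : AchievableAvg M c1 0 0 d2 (R1, R2) := by
  classical
  obtain ⟨hR1, hR2, C, htend⟩ := h
  let D : ∀ n : ℕ, Code M (n+1) R1 R2 c1 0 0 d2 := fun n =>
    { toCF1 := fun _ => ⟨0, msgSize_pos (n+1) h1⟩
      toCF2 := (C n).toCF2
      cf1 := fun _ _ => ⟨0, msgSize_pos (n+1) (le_refl (0:ℝ))⟩
      cf2 := fun _ _ => ⟨0, msgSize_pos (n+1) h4⟩
      f1 := fun w1 z => (C n).f1 w1 z
      f2 := fun w2 _ => (C n).f2 w2 ⟨0, msgSize_pos (n+1) (le_refl (0:ℝ))⟩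
      dec := (C n).dec }
  have herr : ∀ n w1 w2, errProb (D n) w1 w2 = errProb (C n) w1 w2 := by
    intro n w1 w2
    unfold errProb
    apply Finset.sum_congr rfl
    intro y _
    have e1 : (D n).f1 w1 ((D n).cf1 ((D n).toCF1 w1) ((D n).toCF2 w2))
        = (C n).f1 w1 ((C n).cf1 ((C n).toCF1 w1) ((C n).toCF2 w2)) := by
      show (C n).f1 w1 ⟨0, msgSize_pos (n+1) (le_refl (0:ℝ))⟩ = _
      rw [fin_msg0 (n+1) (⟨0, msgSize_pos (n+1) (le_refl (0:ℝ))⟩ : Fin (msgSize (n+1) 0))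
        ((C n).cf1 ((C n).toCF1 w1) ((C n).toCF2 w2))]
    have e2 : (D n).f2 w2 ((D n).cf2 ((D n).toCF1 w1) ((D n).toCF2 w2))
        = (C n).f2 w2 ((C n).cf2 ((C n).toCF1 w1) ((C n).toCF2 w2)) := by
      show (C n).f2 w2 ⟨0, msgSize_pos (n+1) (le_refl (0:ℝ))⟩ = _
      rw [fin_msg0 (n+1) (⟨0, msgSize_pos (n+1) (le_refl (0:ℝ))⟩ : Fin (msgSize (n+1) 0))
        ((C n).cf2 ((C n).toCF1 w1) ((C n).toCF2 w2))]
    rw [e1, e2]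
  have havg : ∀ n, avgErr (D n) = avgErr (C n) := by
    intro n
    unfold avgErr
    congr 1
    exact Finset.sum_congr rfl fun w1 _ => Finset.sum_congr rfl fun w2 _ => herr n w1 w2
  refine ⟨hR1, hR2, D, ?_⟩
  simp only [havg]
  exact htend


lemma core_transfer {M : MAC X1 X2 Y} {n : ℕ} {R1 R2 c1 d1 d2 R1' : ℝ}
    (hR1' : 0 ≤ R1')
    (C : Code M n R1 R2 c1 0 d1 d2)
    (S : Finset (Fin (msgSize n R1))) (zf : Fin (msgSize n d2))
    (hz : ∀ w ∈ S, ∀ z : Fin (msgSize n 0), C.cf2 (C.toCF1 w) z = zf)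
    (hcard : msgSize n R1' ≤ S.card)
    {β : ℝ}
    (hβ : ∀ w ∈ S, (∑ w2, errProb C w w2) ≤ β) :
    ∃ D : Code M n R1' R2 0 0 0 0,
      avgErr D ≤ (1 / (2:ℝ) ^ ((n:ℝ) * (R1' + R2))) * ((msgSize n R1' : ℝ) * β) := by
  classical
  obtain ⟨S', hS'sub, hS'card⟩ := Finset.exists_subset_card_eq hcard
  have hpos : 0 < msgSize n R1' := msgSize_pos n hR1'
  haveI : Nonempty (Fin (msgSize n R1')) := ⟨⟨0, hpos⟩⟩
  set ι : Fin (msgSize n R1') → Fin (msgSize n R1) :=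
    fun i => S'.orderEmbOfFin hS'card i with hι
  have hιinj : Function.Injective ι := (S'.orderEmbOfFin hS'card).injective
  have hιmem : ∀ i, ι i ∈ S := fun i => hS'sub (Finset.orderEmbOfFin_mem _ _ _)
  set ρ : Fin (msgSize n R1) → Fin (msgSize n R1') := Function.invFun ι with hρdef
  have hρ : ∀ i, ρ (ι i) = i := fun i => Function.leftInverse_invFun hιinj i
  set z0 : Fin (msgSize n 0) := ⟨0, msgSize_pos n (le_refl (0:ℝ))⟩ with hz0
  let D : Code M n R1' R2 0 0 0 0 :=
    { toCF1 := fun _ => z0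
      toCF2 := fun _ => z0
      cf1 := fun _ _ => z0
      cf2 := fun _ _ => z0
      f1 := fun i _ => C.f1 (ι i) (C.cf1 (C.toCF1 (ι i)) z0)
      f2 := fun w2 _ => C.f2 w2 zf
      dec := fun y => (ρ (C.dec y).1, (C.dec y).2) }
  have herr : ∀ i w2, errProb D i w2 ≤ errProb C (ι i) w2 := by
    intro i w2
    unfold errProb
    apply Finset.sum_le_sum
    intro y _
    have hx1 : D.f1 i (D.cf1 (D.toCF1 i) (D.toCF2 w2))
        = C.f1 (ι i) (C.cf1 (C.toCF1 (ι i)) (C.toCF2 w2)) := by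
      show C.f1 (ι i) (C.cf1 (C.toCF1 (ι i)) z0) = _
      rw [fin_msg0 n z0 (C.toCF2 w2)]
    have hx2 : D.f2 w2 (D.cf2 (D.toCF1 i) (D.toCF2 w2))
        = C.f2 w2 (C.cf2 (C.toCF1 (ι i)) (C.toCF2 w2)) := by
      show C.f2 w2 zf = _
      rw [hz (ι i) (hιmem i) (C.toCF2 w2)]
    rw [hx1, hx2]
    by_cases hdec : C.dec y = (ι i, w2)
    · have hD : D.dec y = (i, w2) := by
        show (ρ (C.dec y).1, (C.dec y).2) = (i, w2)
        rw [hdec]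
        exact Prod.ext (hρ i) rfl
      rw [if_neg (fun hne => hne hD), if_neg (fun hne => hne hdec)]
    · rw [if_pos hdec]
      split
      · exact le_refl _
      · exact prod_W_nonneg M _ _ _
  have hβ0 : 0 ≤ β := by
    have hmem : ι ⟨0, hpos⟩ ∈ S := hιmem _
    refine le_trans ?_ (hβ _ hmem)
    exact Finset.sum_nonneg fun w2 _ => errProb_nonneg C _ w2
  have hsum : ∑ i, ∑ w2, errProb D i w2 ≤ (msgSize n R1' : ℝ) * β := by
    calc ∑ i, ∑ w2, errProb D i w2 ≤ ∑ _i : Fin (msgSize n R1'), β := by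
          apply Finset.sum_le_sum
          intro i _
          exact le_trans (Finset.sum_le_sum fun w2 _ => herr i w2) (hβ (ι i) (hιmem i))
      _ = (msgSize n R1' : ℝ) * β := by
          rw [Finset.sum_const, Finset.card_univ, nsmul_eq_mul, Fintype.card_fin]
  refine ⟨D, ?_⟩
  unfold avgErr
  exact mul_le_mul_of_nonneg_left hsum (by positivity)


lemma good_fiber {N K m : ℕ} (hK : 0 < K) (f : Fin N → Fin K)
    (e : Fin N → ℝ) (he : ∀ w, 0 ≤ e w)
    (hm : 4 * ((K:ℝ) * (m:ℝ)) ≤ (N:ℝ)) :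
    ∃ (S : Finset (Fin N)) (u : Fin K),
      m ≤ S.card ∧ (∀ w ∈ S, f w = u) ∧
      (∀ w ∈ S, (N:ℝ) * e w ≤ 4 * ∑ v, e v) := by
  classical
  set E := ∑ v, e v with hE
  have hE0 : 0 ≤ E := Finset.sum_nonneg fun v _ => he v
  have hN0 : (0:ℝ) ≤ (N:ℝ) := Nat.cast_nonneg N
  set Good := Finset.univ.filter (fun w : Fin N => (N:ℝ) * e w ≤ 4 * E) with hGood
  have hcard : (K : ℝ) * m ≤ (Good.card : ℝ) := by
    set Bad := Finset.univ.filter (fun w : Fin N => ¬ ((N:ℝ) * e w ≤ 4 * E)) with hBad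
    have hsplit : Good.card + Bad.card = N := by
      rw [hGood, hBad, Finset.card_filter_add_card_filter_not,
        Finset.card_univ, Fintype.card_fin]
    rcases eq_or_lt_of_le hE0 with hE0' | hEpos
    · have hGoodall : Good = Finset.univ := by
        rw [hGood]
        apply Finset.filter_true_of_mem
        intro w _
        have hw0 : e w = 0 :=
          (Finset.sum_eq_zero_iff_of_nonneg (fun v _ => he v)).mp hE0'.symm w (Finset.mem_univ w)
        rw [hw0, ← hE0']
        norm_num
      rw [hGoodall, Finset.card_univ, Fintype.card_fin]
      linarith
    · have hBadle : (Bad.card : ℝ) * (4 * E) ≤ (N:ℝ) * E := by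
        calc (Bad.card : ℝ) * (4 * E) = ∑ _w ∈ Bad, 4 * E := by
              rw [Finset.sum_const, nsmul_eq_mul]
          _ ≤ ∑ w ∈ Bad, (N:ℝ) * e w :=
              Finset.sum_le_sum fun w hw =>
                le_of_lt (lt_of_not_ge (Finset.mem_filter.mp hw).2)
          _ ≤ ∑ w, (N:ℝ) * e w :=
              Finset.sum_le_sum_of_subset_of_nonneg (Finset.subset_univ _)
                (fun w _ _ => mul_nonneg hN0 (he w))
          _ = (N:ℝ) * E := by rw [← Finset.mul_sum]
      have hBadcard : (Bad.card : ℝ) * 4 ≤ (N:ℝ) := by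
        have h1 : ((Bad.card : ℝ) * 4) * E ≤ (N:ℝ) * E := by nlinarith
        exact le_of_mul_le_mul_right h1 hEpos
      have hG : (Good.card : ℝ) = (N:ℝ) - (Bad.card : ℝ) := by
        have := hsplit
        push_cast [← this]
        ring
      rw [hG]
      linarith
  haveI : Nonempty (Fin K) := ⟨⟨0, hK⟩⟩
  have hmulnat : (Finset.univ : Finset (Fin K)).card * m ≤ Good.card := by
    rw [Finset.card_univ, Fintype.card_fin]
    have : ((K * m : ℕ) : ℝ) ≤ (Good.card : ℝ) := by push_cast; exact hcard
    exact_mod_cast this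
  obtain ⟨u, _, hu⟩ := Finset.exists_le_card_fiber_of_mul_le_card_of_maps_to
    (fun a (_ : a ∈ Good) => Finset.mem_univ (f a)) Finset.univ_nonempty hmulnat
  refine ⟨Good.filter (fun w => f w = u), u, hu, ?_, ?_⟩
  · intro w hw; exact (Finset.mem_filter.mp hw).2
  · intro w hw
    exact (Finset.mem_filter.mp (Finset.mem_filter.mp hw).1).2


set_option maxHeartbeats 1000000 in
lemma transfer_rate {M : MAC X1 X2 Y} {c1 d1 d2 R1 R2 R1' : ℝ}
    (hc1 : 0 ≤ c1) (hd2 : 0 ≤ d2) (hR1' : 0 ≤ R1')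
    (hlt : R1' + min c1 d2 < R1)
    (h : AchievableAvg M c1 0 d1 d2 (R1, R2)) :
    AchievableAvg M 0 0 0 0 (R1', R2) := by
  classical
  obtain ⟨hR1, hR2, C, htend⟩ := h
  obtain ⟨hX1, hX2⟩ := code_nonempty_inputs hR1 hR2 (C 0)
  set mm := min c1 d2 with hmm
  have hmm0 : 0 ≤ mm := le_min hc1 hd2
  set δ := R1 - R1' - mm with hδ
  have hδ0 : 0 < δ := by rw [hδ]; linarith
  have key : ∀ n : ℕ, (3:ℝ) ≤ ((n+1:ℕ):ℝ) * δ →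
      ∃ D : Code M (n+1) R1' R2 0 0 0 0, avgErr D ≤ 8 * avgErr (C n) := by
    intro n hn
    set nr : ℝ := ((n+1:ℕ):ℝ) with hnr
    set N1 := msgSize (n+1) R1 with hN1def
    have hN1pos : 0 < N1 := msgSize_pos (n+1) hR1
    set e : Fin N1 → ℝ := fun w1 => ∑ w2, errProb (C n) w1 w2 with he_def
    have he : ∀ w, 0 ≤ e w := fun w =>
      Finset.sum_nonneg fun w2 _ => errProb_nonneg _ _ _
    set E := ∑ w1, e w1 with hE_def
    have hE0 : 0 ≤ E := Finset.sum_nonneg fun w1 _ => he w1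
    have havgE : avgErr (C n) = (1 / (2:ℝ) ^ (nr * (R1 + R2))) * E := rfl
    set z0 : Fin (msgSize (n+1) 0) := ⟨0, msgSize_pos (n+1) (le_refl (0:ℝ))⟩ with hz0
    -- the main construction, parameterized by the pigeonhole function
    have main : ∀ (K : ℕ) (f : Fin N1 → Fin K), 0 < K →
        (K:ℝ) ≤ (2:ℝ) ^ (nr * mm) →
        (∀ w w' (z z' : Fin (msgSize (n+1) 0)), f w = f w' →
          (C n).cf2 ((C n).toCF1 w) z = (C n).cf2 ((C n).toCF1 w') z') →
        ∃ D : Code M (n+1) R1' R2 0 0 0 0, avgErr D ≤ 8 * avgErr (C n) := by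
      intro K f hK hKle hconst
      -- numeric bound for the pigeonhole
      have hmsg : (msgSize (n+1) R1' : ℝ) ≤ (2:ℝ) ^ (nr * R1') := msgSize_le_rpow _ _
      have hN1low : (2:ℝ) ^ (nr * R1) ≤ 2 * (N1:ℝ) := rpow_le_two_mul_msgSize _ hR1
      have hKm : 4 * ((K:ℝ) * (msgSize (n+1) R1' : ℝ)) ≤ (N1:ℝ) := by
        have h1 : (K:ℝ) * (msgSize (n+1) R1' : ℝ)
            ≤ (2:ℝ) ^ (nr * mm) * (2:ℝ) ^ (nr * R1') :=
          mul_le_mul hKle hmsg (Nat.cast_nonneg _) (by positivity)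
        have h2 : (2:ℝ) ^ (nr * mm) * (2:ℝ) ^ (nr * R1')
            = (2:ℝ) ^ (nr * mm + nr * R1') := (Real.rpow_add (by norm_num) _ _).symm
        have h3 : (2:ℝ) ^ (nr * mm + nr * R1' + 3) ≤ (2:ℝ) ^ (nr * R1) := by
          apply Real.rpow_le_rpow_of_exponent_le (by norm_num)
          have : nr * δ = nr * R1 - nr * R1' - nr * mm := by rw [hδ]; ring
          linarith
        have h4 : (2:ℝ) ^ (nr * mm + nr * R1' + 3)
            = (2:ℝ) ^ (nr * mm + nr * R1') * 8 := by
          have h8 : (2:ℝ) ^ (3:ℝ) = 8 := by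
            rw [show (3:ℝ) = ((3:ℕ):ℝ) by norm_num, Real.rpow_natCast]
            norm_num
          rw [Real.rpow_add (by norm_num), h8]
        nlinarith [h1, h2, h3, h4]
      obtain ⟨S, u, hScard, hSfib, hSe⟩ := good_fiber hK f e he hKm
      have hSne : S.Nonempty := by
        rw [← Finset.card_pos]
        exact lt_of_lt_of_le (msgSize_pos (n+1) hR1') hScard
      obtain ⟨w0, hw0⟩ := hSne
      set zf := (C n).cf2 ((C n).toCF1 w0) z0 with hzf
      have hz : ∀ w ∈ S, ∀ z : Fin (msgSize (n+1) 0),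
          (C n).cf2 ((C n).toCF1 w) z = zf := by
        intro w hw z
        exact hconst w w0 z z0 (by rw [hSfib w hw, hSfib w0 hw0])
      have hβ : ∀ w ∈ S, (∑ w2, errProb (C n) w w2) ≤ 4 * E / N1 := by
        intro w hw
        have := hSe w hw
        rw [le_div_iff₀ (by exact_mod_cast hN1pos)]
        calc (∑ w2, errProb (C n) w w2) * (N1:ℝ) = (N1:ℝ) * e w := by
              rw [he_def]; ring
          _ ≤ 4 * E := this
      obtain ⟨D, hD⟩ := core_transfer hR1' (C n) S zf hz hScard hβ
      refine ⟨D, le_trans hD ?_⟩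
      -- algebra: (1/2^(nr(R1'+R2))) * (msg * (4E/N1)) ≤ 8 * ((1/2^(nr(R1+R2))) * E)
      rw [havgE]
      set P1 : ℝ := (2:ℝ) ^ (nr * R1) with hP1
      set P1' : ℝ := (2:ℝ) ^ (nr * R1') with hP1'
      set P2 : ℝ := (2:ℝ) ^ (nr * R2) with hP2
      have hP1pos : 0 < P1 := by rw [hP1]; positivity
      have hP1'pos : 0 < P1' := by rw [hP1']; positivity
      have hP2pos : 0 < P2 := by rw [hP2]; positivity
      have hA : (2:ℝ) ^ (nr * (R1 + R2)) = P1 * P2 := by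
        rw [hP1, hP2, ← Real.rpow_add (by norm_num)]; ring_nf
      have hA' : (2:ℝ) ^ (nr * (R1' + R2)) = P1' * P2 := by
        rw [hP1', hP2, ← Real.rpow_add (by norm_num)]; ring_nf
      rw [hA, hA']
      have hLHS : (1 / (P1' * P2)) * ((msgSize (n+1) R1' : ℝ) * (4 * E / N1))
          = ((msgSize (n+1) R1' : ℝ) * (4 * E)) / (P1' * P2 * N1) := by
        field_simp
      have hRHS : 8 * ((1 / (P1 * P2)) * E) = (8 * E) / (P1 * P2) := by
        field_simp
      rw [hLHS, hRHS]
      rw [div_le_div_iff₀ (by positivity) (by positivity)]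
      have hmm1 : (msgSize (n+1) R1' : ℝ) * P1 ≤ P1' * (2 * N1) :=
        mul_le_mul hmsg hN1low (by positivity) (le_of_lt hP1'pos)
      have hmm2 : (4 * E * P2) * ((msgSize (n+1) R1' : ℝ) * P1)
          ≤ (4 * E * P2) * (P1' * (2 * N1)) :=
        mul_le_mul_of_nonneg_left hmm1 (by positivity)
      nlinarith [hmm2]
    -- apply main in each of the two cases of the min
    rcases le_total c1 d2 with hcd | hcd
    · have hK : 0 < msgSize (n+1) c1 := msgSize_pos _ hc1
      have hKle : ((msgSize (n+1) c1 : ℕ) : ℝ) ≤ (2:ℝ) ^ (nr * mm) := by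
        rw [hmm, min_eq_left hcd]
        exact msgSize_le_rpow _ _
      exact main (msgSize (n+1) c1) (C n).toCF1 hK hKle
        (fun w w' z z' hf => by rw [hf, fin_msg0 (n+1) z z'])
    · have hK : 0 < msgSize (n+1) d2 := msgSize_pos _ hd2
      have hKle : ((msgSize (n+1) d2 : ℕ) : ℝ) ≤ (2:ℝ) ^ (nr * mm) := by
        rw [hmm, min_eq_right hcd]
        exact msgSize_le_rpow _ _
      exact main (msgSize (n+1) d2) (fun w => (C n).cf2 ((C n).toCF1 w) z0) hK hKle
        (fun w w' z z' hf => by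
          rw [fin_msg0 (n+1) z z0, fin_msg0 (n+1) z' z0]
          exact hf)
  -- assemble the family of codes (junk codes for small n)
  have all : ∀ n : ℕ, ∃ D : Code M (n+1) R1' R2 0 0 0 0,
      ((3:ℝ) ≤ ((n+1:ℕ):ℝ) * δ → avgErr D ≤ 8 * avgErr (C n)) := by
    intro n
    by_cases hn : (3:ℝ) ≤ ((n+1:ℕ):ℝ) * δ
    · obtain ⟨D, hD⟩ := key n hn
      exact ⟨D, fun _ => hD⟩
    · refine ⟨{ toCF1 := fun _ => ⟨0, msgSize_pos (n+1) (le_refl (0:ℝ))⟩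
                toCF2 := fun _ => ⟨0, msgSize_pos (n+1) (le_refl (0:ℝ))⟩
                cf1 := fun _ _ => ⟨0, msgSize_pos (n+1) (le_refl (0:ℝ))⟩
                cf2 := fun _ _ => ⟨0, msgSize_pos (n+1) (le_refl (0:ℝ))⟩
                f1 := fun _ _ _ => Classical.arbitrary X1
                f2 := fun _ _ _ => Classical.arbitrary X2
                dec := fun _ => (⟨0, msgSize_pos (n+1) hR1'⟩, ⟨0, msgSize_pos (n+1) hR2⟩) },
              fun hcon => absurd hcon hn⟩
  choose D hD using all
  refine ⟨hR1', hR2, D, ?_⟩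
  have hglim : Filter.Tendsto (fun n => 8 * avgErr (C n)) Filter.atTop (nhds 0) := by
    have := htend.const_mul (8:ℝ)
    simpa using this
  apply squeeze_zero' ?_ ?_ hglim
  · exact Filter.Eventually.of_forall fun n => avgErr_nonneg (D n)
  · have hev : ∀ᶠ n : ℕ in Filter.atTop, (3:ℝ) ≤ ((n+1:ℕ):ℝ) * δ := by
      filter_upwards [Filter.eventually_ge_atTop ⌈(3:ℝ)/δ⌉₊] with n hns
      have h1 : (3:ℝ)/δ ≤ (⌈(3:ℝ)/δ⌉₊ : ℝ) := Nat.le_ceil _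
      have h2 : ((⌈(3:ℝ)/δ⌉₊ : ℕ) : ℝ) ≤ (n:ℝ) := by exact_mod_cast hns
      have h3 : (3:ℝ)/δ ≤ ((n+1:ℕ):ℝ) := by push_cast; push_cast at h2; linarith
      rw [div_le_iff₀ hδ0] at h3
      linarith
    filter_upwards [hev] with n hn
    exact hD n hn

set_option maxHeartbeats 1000000 in
lemma transfer_zero {M : MAC X1 X2 Y} {c1 d1 d2 R1 R2 : ℝ}
    (h : AchievableAvg M c1 0 d1 d2 (R1, R2)) :
    AchievableAvg M 0 0 0 0 (0, R2) := by
  classical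
  obtain ⟨hR1, hR2, C, htend⟩ := h
  have key : ∀ n : ℕ,
      ∃ D : Code M (n+1) 0 R2 0 0 0 0, avgErr D ≤ 2 * avgErr (C n) := by
    intro n
    set nr : ℝ := ((n+1:ℕ):ℝ) with hnr
    set N1 := msgSize (n+1) R1 with hN1def
    have hN1pos : 0 < N1 := msgSize_pos (n+1) hR1
    set e : Fin N1 → ℝ := fun w1 => ∑ w2, errProb (C n) w1 w2 with he_def
    set E := ∑ w1, e w1 with hE_def
    have hE0 : 0 ≤ E := Finset.sum_nonneg fun w1 _ =>
      Finset.sum_nonneg fun w2 _ => errProb_nonneg _ _ _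
    have havgE : avgErr (C n) = (1 / (2:ℝ) ^ (nr * (R1 + R2))) * E := rfl
    set z0 : Fin (msgSize (n+1) 0) := ⟨0, msgSize_pos (n+1) (le_refl (0:ℝ))⟩ with hz0
    haveI : Nonempty (Fin N1) := ⟨⟨0, hN1pos⟩⟩
    -- find a message with error at most the average
    have hexists : ∃ w0 : Fin N1, e w0 ≤ E / N1 := by
      by_contra hcon
      push_neg at hcon
      have : E < E := by
        calc E = ∑ w1, e w1 := hE_def
          _ > ∑ _w1 : Fin N1, E / N1 := by
              apply Finset.sum_lt_sum_of_nonempty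
              · exact Finset.univ_nonempty
              · intro w _; exact hcon w
          _ = E := by
              rw [Finset.sum_const, Finset.card_univ, Fintype.card_fin, nsmul_eq_mul]
              field_simp
      exact lt_irrefl E this
    obtain ⟨w0, hw0⟩ := hexists
    set zf := (C n).cf2 ((C n).toCF1 w0) z0 with hzf
    have hz : ∀ w ∈ ({w0} : Finset (Fin N1)), ∀ z : Fin (msgSize (n+1) 0),
        (C n).cf2 ((C n).toCF1 w) z = zf := by
      intro w hw z
      rw [Finset.mem_singleton] at hw
      rw [hw, fin_msg0 (n+1) z z0]
    have hcard : msgSize (n+1) 0 ≤ ({w0} : Finset (Fin N1)).card := by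
      rw [Finset.card_singleton, msgSize_zero]
    have hβ : ∀ w ∈ ({w0} : Finset (Fin N1)), (∑ w2, errProb (C n) w w2) ≤ E / N1 := by
      intro w hw
      rw [Finset.mem_singleton] at hw
      rw [hw]
      exact hw0
    obtain ⟨D, hD⟩ := core_transfer (le_refl (0:ℝ)) (C n) {w0} zf hz hcard hβ
    refine ⟨D, le_trans hD ?_⟩
    rw [havgE, msgSize_zero]
    set P1 : ℝ := (2:ℝ) ^ (nr * R1) with hP1
    set P2 : ℝ := (2:ℝ) ^ (nr * R2) with hP2
    have hP1pos : 0 < P1 := by rw [hP1]; positivity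
    have hP2pos : 0 < P2 := by rw [hP2]; positivity
    have hN1low : P1 ≤ 2 * (N1:ℝ) := rpow_le_two_mul_msgSize _ hR1
    have hA : (2:ℝ) ^ (nr * (R1 + R2)) = P1 * P2 := by
      rw [hP1, hP2, ← Real.rpow_add (by norm_num)]; ring_nf
    have hA' : (2:ℝ) ^ (nr * ((0:ℝ) + R2)) = P2 := by
      rw [hP2]; ring_nf
    rw [hA, hA']
    have hLHS : (1 / P2) * ((1:ℕ) * (E / N1)) = E / (P2 * N1) := by
      push_cast
      field_simp
    rw [hLHS]
    have hRHS : 2 * ((1 / (P1 * P2)) * E) = (2 * E) / (P1 * P2) := by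
      field_simp
    rw [hRHS]
    rw [div_le_div_iff₀ (by positivity) (by positivity)]
    nlinarith [mul_le_mul_of_nonneg_left hN1low (mul_nonneg hE0 (le_of_lt hP2pos))]
  choose D hD using key
  refine ⟨le_refl 0, hR2, D, ?_⟩
  have hglim : Filter.Tendsto (fun n => 2 * avgErr (C n)) Filter.atTop (nhds 0) := by
    have := htend.const_mul (2:ℝ)
    simpa using this
  exact squeeze_zero (fun n => avgErr_nonneg (D n)) hD hglim


end StatementProof

/-- For any discrete memoryless MAC, any `C_in¹ ≥ 0`, and any
`C_out ∈ ℝ²_{≥0}`,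
`C_sum,avg((C_in¹,0), C_out) ≤ C_sum,avg((0,0),(0,0)) + min{C_in¹, C_out²}`; consequently
`C_out² ↦ C_sum,avg((C_in¹,0),(0,C_out²))` is continuous at `C_out² = 0` (from within
`ℝ_{≥0}`). -/
theorem csumAvg_oneSided_bound_and_continuity
    {X1 X2 Y : Type} [Fintype X1] [Fintype X2] [Fintype Y]
    (M : MAC X1 X2 Y) (c1 : ℝ) (hc1 : 0 ≤ c1) :
    (∀ Cout : ℝ × ℝ, 0 ≤ Cout.1 → 0 ≤ Cout.2 →
      CsumAvg M (c1, 0) Cout ≤ CsumAvg M (0, 0) (0, 0) + min c1 Cout.2) ∧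
    ContinuousWithinAt (fun d2 : ℝ => CsumAvg M (c1, 0) (0, d2)) (Set.Ici 0) 0 := by
  classical
  by_cases hX : Nonempty X1 ∧ Nonempty X2
  case neg =>
    have hempty : ∀ a b cc dd : ℝ, {R : ℝ × ℝ | AchievableAvg M a b cc dd R} = ∅ := by
      intro a b cc dd
      ext R
      simp only [Set.mem_empty_iff_false, iff_false, Set.mem_setOf_eq]
      intro hach
      obtain ⟨hR1, hR2, C,derp⟩ := hach
      exact hX (code_nonempty_inputs hR1 hR2 (C 0))
    have hcz : ∀ Cin Cout : ℝ × ℝ, CsumAvg M Cin Cout = 0 := by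
      intro Cin Cout
      unfold CsumAvg
      rw [hempty, closure_empty]
      have hset : {s : ℝ | ∃ R ∈ (∅ : Set (ℝ × ℝ)), s = R.1 + R.2} = ∅ := by
        ext s; simp
      rw [hset, Real.sSup_empty]
    constructor
    · intro Cout h1 h2
      rw [hcz, hcz]
      have : 0 ≤ min c1 Cout.2 := le_min hc1 h2
      linarith
    · have heq : (fun d2 : ℝ => CsumAvg M (c1, 0) (0, d2)) = fun _ => (0:ℝ) :=
        funext fun d2 => hcz _ _
      rw [heq]
      exact continuousWithinAt_const
  case pos =>
    obtain ⟨hX1, hX2⟩ := hX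
    set B := Real.logb 2 (Fintype.card Y) with hB
    set SS : ℝ → ℝ → ℝ → ℝ → Set ℝ := fun a b cc dd =>
      {s | ∃ R ∈ closure {R : ℝ × ℝ | AchievableAvg M a b cc dd R}, s = R.1 + R.2} with hSS
    have hCs : ∀ Cin Cout : ℝ × ℝ, CsumAvg M Cin Cout = sSup (SS Cin.1 Cin.2 Cout.1 Cout.2) :=
      fun _ _ => rfl
    have hsub : ∀ a b cc dd : ℝ, SS a b cc dd ⊆ Set.Iic B := by
      intro a b cc dd s hs
      obtain ⟨R, hR, rfl⟩ := hs
      have hclosed : IsClosed {R : ℝ × ℝ | R.1 + R.2 ≤ B} :=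
        isClosed_le (continuous_fst.add continuous_snd) continuous_const
      have hcl : closure {R : ℝ × ℝ | AchievableAvg M a b cc dd R}
          ⊆ {R : ℝ × ℝ | R.1 + R.2 ≤ B} :=
        closure_minimal (fun R' hR' => achievable_sum_le hR') hclosed
      exact hcl hR
    have hBdd : ∀ a b cc dd : ℝ, BddAbove (SS a b cc dd) :=
      fun a b cc dd => ⟨B, fun s hs => hsub a b cc dd hs⟩
    have h0mem : ∀ a b cc dd : ℝ, 0 ≤ a → 0 ≤ b → 0 ≤ cc → 0 ≤ dd →
        (0:ℝ) ∈ SS a b cc dd := by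
      intro a b cc dd ha hb hc hd
      exact ⟨((0:ℝ), (0:ℝ)),
        subset_closure (achievable_zero_zero M hX1 hX2 ha hb hc hd), by norm_num⟩
    have hC00 : (0:ℝ) ≤ sSup (SS 0 0 0 0) :=
      le_csSup (hBdd 0 0 0 0) (h0mem 0 0 0 0 le_rfl le_rfl le_rfl le_rfl)
    -- Part 1
    have part1 : ∀ Cout : ℝ × ℝ, 0 ≤ Cout.1 → 0 ≤ Cout.2 →
        CsumAvg M (c1, 0) Cout ≤ CsumAvg M (0, 0) (0, 0) + min c1 Cout.2 := by
      intro Cout h1 h2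
      rw [hCs (c1, 0) Cout, hCs (0,0) (0,0)]
      have hminpos : 0 ≤ min c1 Cout.2 := le_min hc1 h2
      apply Real.sSup_le
      · intro s hs
        obtain ⟨R, hR, rfl⟩ := hs
        have hach : {R : ℝ × ℝ | AchievableAvg M c1 0 Cout.1 Cout.2 R}
            ⊆ {R : ℝ × ℝ | R.1 + R.2 ≤ sSup (SS 0 0 0 0) + min c1 Cout.2} := by
          intro R' hR'
          have hR1' : 0 ≤ R'.1 := hR'.1
          have hR2' : 0 ≤ R'.2 := hR'.2.1
          show R'.1 + R'.2 ≤ _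
          apply le_of_forall_pos_le_add
          intro η hη
          have hach2 : AchievableAvg M c1 0 Cout.1 Cout.2 (R'.1, R'.2) := hR'
          rcases le_or_gt (min c1 Cout.2 + η) R'.1 with hcase | hcase
          · have htr := transfer_rate (R1' := R'.1 - (min c1 Cout.2 + η)) hc1 h2
              (by linarith) (by linarith) hach2
            have hmem : R'.1 - (min c1 Cout.2 + η) + R'.2 ∈ SS 0 0 0 0 :=
              ⟨(R'.1 - (min c1 Cout.2 + η), R'.2), subset_closure htr, rfl⟩
            have hle := le_csSup (hBdd 0 0 0 0) hmem
            linarith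
          · have htr := transfer_zero hach2
            have hmem : (0:ℝ) + R'.2 ∈ SS 0 0 0 0 :=
              ⟨((0:ℝ), R'.2), subset_closure htr, rfl⟩
            have hle := le_csSup (hBdd 0 0 0 0) hmem
            linarith
        have hclosed : IsClosed {R : ℝ × ℝ | R.1 + R.2 ≤ sSup (SS 0 0 0 0) + min c1 Cout.2} :=
          isClosed_le (continuous_fst.add continuous_snd) continuous_const
        exact closure_minimal hach hclosed hR
      · linarith
    refine ⟨part1, ?_⟩
    -- Part 2: continuity
    have hmono : ∀ d2 : ℝ, 0 ≤ d2 →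
        CsumAvg M (0, 0) (0, 0) ≤ CsumAvg M (c1, 0) (0, d2) := by
      intro d2 hd2
      rw [hCs (0,0) (0,0), hCs (c1,0) (0,d2)]
      apply csSup_le_csSup (hBdd c1 0 0 d2)
        ⟨0, h0mem 0 0 0 0 le_rfl le_rfl le_rfl le_rfl⟩
      intro s hs
      obtain ⟨R, hR, rfl⟩ := hs
      refine ⟨R, ?_, rfl⟩
      have hmono' : {R : ℝ × ℝ | AchievableAvg M 0 0 0 0 R}
          ⊆ {R : ℝ × ℝ | AchievableAvg M c1 0 0 d2 R} :=
        fun R' hR' => achievable_ext M hc1 hd2 hR'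
      exact closure_mono hmono' hR
    have hupper : ∀ d2 : ℝ, 0 ≤ d2 →
        CsumAvg M (c1, 0) (0, d2) ≤ CsumAvg M (0, 0) (0, 0) + d2 := by
      intro d2 hd2
      have hp := part1 (0, d2) le_rfl hd2
      have hm : min c1 (0, d2).2 ≤ d2 := min_le_right _ _
      linarith
    have hf0 : CsumAvg M (c1, 0) ((0:ℝ), (0:ℝ)) = CsumAvg M (0, 0) (0, 0) := by
      apply le_antisymm
      · have hp := part1 ((0:ℝ), (0:ℝ)) le_rfl le_rfl
        have hm : min c1 ((0:ℝ), (0:ℝ)).2 = 0 := min_eq_right hc1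
        rw [hm] at hp
        linarith
      · exact hmono 0 le_rfl
    have htt : Filter.Tendsto (fun d2 : ℝ => CsumAvg M (c1, 0) (0, d2))
        (nhdsWithin 0 (Set.Ici 0)) (nhds (CsumAvg M (0, 0) (0, 0))) := by
      apply tendsto_of_tendsto_of_tendsto_of_le_of_le'
        (g := fun _ : ℝ => CsumAvg M (0, 0) (0, 0))
        (h := fun d2 : ℝ => CsumAvg M (0, 0) (0, 0) + d2)
        tendsto_const_nhds
      · have hcont : Filter.Tendsto (fun d2 : ℝ => CsumAvg M (0, 0) (0, 0) + d2)
            (nhds 0) (nhds (CsumAvg M (0, 0) (0, 0) + 0)) :=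
          (continuous_const.add continuous_id).tendsto 0
        rw [add_zero] at hcont
        exact hcont.mono_left nhdsWithin_le_nhds
      · filter_upwards [self_mem_nhdsWithin] with x hx
        exact hmono x hx
      · filter_upwards [self_mem_nhdsWithin] with x hx
        exact hupper x hx
    show Filter.Tendsto _ _ (nhds ((fun d2 : ℝ => CsumAvg M (c1, 0) (0, d2)) 0))
    rw [show (fun d2 : ℝ => CsumAvg M (c1, 0) (0, d2)) 0 = CsumAvg M (0, 0) (0, 0) from hf0]
    exact htt
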